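/- Let r ≥ 2 be an integer, and let a, b be integers with 1 ≤ a ≤ b-1 and r·(a+1) ≤ b+1. Then the inequality is strict: r·∑_{l=0}^{a} C(a,l)·(b+1)^{\underline{l}} < (b+1)·b^{\underline{a}}. (That is, equality in the bound r·∑_{l=0}^{a} C(a,l)·(b+1)^{\underline{l}} ≤ (b+1)·b^{\underline{a}} is possible only when a = 0.) -/

import Mathlib

open Finset

lemma sum_rec' (a n : ℕ) :
    ∑ l ∈ range (a+2), (a+1).choose l * (n+1).descFactorial l
      = ∑ l ∈ range (a+1), a.choose l * (n+1).descFactorial l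
        + (n+1) * ∑ l ∈ range (a+1), a.choose l * n.descFactorial l := by
  have h1 : ∑ l ∈ range (a+2), (a+1).choose l * (n+1).descFactorial l
      = 1 + ∑ l ∈ range (a+1), (a+1).choose (l+1) * (n+1).descFactorial (l+1) := by
    rw [Finset.sum_range_succ' (fun l => (a+1).choose l * (n+1).descFactorial l) (a+1)]
    simp [add_comm]
  have h2 : ∑ l ∈ range (a+1), a.choose l * (n+1).descFactorial l
      = 1 + ∑ l ∈ range (a+1), a.choose (l+1) * (n+1).descFactorial (l+1) := by
    rw [Finset.sum_range_succ (fun l => a.choose (l+1) * (n+1).descFactorial (l+1)) a,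
      Finset.sum_range_succ' (fun l => a.choose l * (n+1).descFactorial l) a]
    simp [add_comm]
  rw [h1, h2]
  simp only [Nat.choose_succ_succ, Nat.succ_descFactorial_succ, add_mul, mul_add,
    Finset.sum_add_distrib, Finset.mul_sum]
  simp only [Nat.succ_eq_add_one, one_mul]
  ring_nf
  have h3 : ∑ x ∈ range (1+a), a.choose x * n * n.descFactorial x
      = ∑ x ∈ range (1+a), n * a.choose x * n.descFactorial x :=
    Finset.sum_congr rfl (fun x _ => by ring)
  rw [h3]
  omega


lemma key_bound : ∀ a n : ℕ, 2*a+1 ≤ n →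
    4 * ∑ l ∈ range (a+1), a.choose l * (n+1).descFactorial l
      ≤ (a+4) * (n+1).descFactorial a := by
  intro a
  induction a with
  | zero => intro n _; simp
  | succ a ih =>
    intro n hn
    obtain ⟨k, rfl⟩ : ∃ k, n = k + 1 := ⟨n - 1, by omega⟩
    have h1 := ih (k+1) (by omega)
    have h2 := ih k (by omega)
    have hrec : ∑ l ∈ range (a+2), (a+1).choose l * (k+2).descFactorial l
        = ∑ l ∈ range (a+1), a.choose l * (k+2).descFactorial l
          + (k+2) * ∑ l ∈ range (a+1), a.choose l * (k+1).descFactorial l :=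
      sum_rec' a (k+1)
    rw [hrec]
    have hd : (k+2).descFactorial (a+1) = (k+2-a) * (k+2).descFactorial a :=
      Nat.descFactorial_succ _ _
    have hd2 : (k+2).descFactorial (a+1) = (k+2) * (k+1).descFactorial a :=
      Nat.succ_descFactorial_succ _ _
    -- 4*(S1 + (k+2)*S2) ≤ (a+4)*D1 + (k+2)*(a+4)*D2 = (a+4)*D1 + (a+4)*Dnew ≤ (a+5)*Dnew
    have step : (a+4) * (k+2).descFactorial a ≤ (k+2).descFactorial (a+1) := by
      rw [hd]
      have : a + 4 ≤ k + 2 - a := by omega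
      exact Nat.mul_le_mul_right _ this
    calc 4 * (∑ l ∈ range (a+1), a.choose l * (k+2).descFactorial l
          + (k+2) * ∑ l ∈ range (a+1), a.choose l * (k+1).descFactorial l)
        = 4 * ∑ l ∈ range (a+1), a.choose l * (k+2).descFactorial l
          + (k+2) * (4 * ∑ l ∈ range (a+1), a.choose l * (k+1).descFactorial l) := by ring
      _ ≤ (a+4) * (k+2).descFactorial a + (k+2) * ((a+4) * (k+1).descFactorial a) :=
          Nat.add_le_add h1 (Nat.mul_le_mul_left _ h2)
      _ = (a+4) * (k+2).descFactorial a + (a+4) * ((k+2) * (k+1).descFactorial a) := by ring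
      _ = (a+4) * (k+2).descFactorial a + (a+4) * (k+2).descFactorial (a+1) := by rw [← hd2]
      _ ≤ (k+2).descFactorial (a+1) + (a+4) * (k+2).descFactorial (a+1) := by
          exact Nat.add_le_add_right step _
      _ = (a+1+4) * (k+2).descFactorial (a+1) := by ring

theorem stmt_2 (r a b : ℕ) (hr : 2 ≤ r) (ha : 1 ≤ a) (hab : a + 1 ≤ b)
    (hrab : r * (a + 1) ≤ b + 1) :
    r * ∑ l ∈ Finset.range (a + 1), a.choose l * (b + 1).descFactorial l <
      (b + 1) * b.descFactorial a := by
  have hb : 2*a+1 ≤ b := by nlinarith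
  have hk := key_bound a b hb
  have hD : 0 < (b+1).descFactorial a := Nat.pos_of_ne_zero (fun h => by have := Nat.descFactorial_eq_zero_iff_lt.mp h; omega)
  have hgoal : (b+1) * b.descFactorial a = (b+1).descFactorial (a+1) :=
    (Nat.succ_descFactorial_succ b a).symm
  rw [hgoal, Nat.descFactorial_succ]
  -- goal : r * S < (b+1-a) * D
  obtain ⟨c, hc⟩ : ∃ c, b + 1 = c + a := ⟨b+1-a, by omega⟩
  have hcsub : b + 1 - a = c := by omega
  have hcoef : r * (a+4) < 4 * (b+1-a) := by
    rw [hcsub]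
    nlinarith [hrab, hr, ha]
  have h4 : 4 * (r * ∑ l ∈ range (a+1), a.choose l * (b+1).descFactorial l)
      < 4 * ((b+1-a) * (b+1).descFactorial a) :=
    calc 4 * (r * ∑ l ∈ range (a+1), a.choose l * (b+1).descFactorial l)
        = r * (4 * ∑ l ∈ range (a+1), a.choose l * (b+1).descFactorial l) := by ring
      _ ≤ r * ((a+4) * (b+1).descFactorial a) := Nat.mul_le_mul_left _ hk
      _ = (r * (a+4)) * (b+1).descFactorial a := by ring
      _ < (4*(b+1-a)) * (b+1).descFactorial a := by
        exact Nat.mul_lt_mul_of_lt_of_le hcoef le_rfl hD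
      _ = 4 * ((b+1-a) * (b+1).descFactorial a) := by ring
  omega
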